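/- arXiv:1701.01713 — 2 statements merged into one kernel-verified Lean document; each statement's English description precedes it below -/
import Mathlib

section
/- Let k and l be real numbers and let h : ℝ → ℝ be the degree-8 polynomial function defined in the context. Then h(1) = (2k+1)·(4k+2l+1)·(k-l)·(2k+l)². Consequently, if k and l are positive integers with k < l, then h(1) < 0. -/
/-- Value at `1` of the degree-8 Gröbner-basis polynomial `h` arising from the
Einstein equations for `Ad(Sp(k)×Sp(k)×Sp(l))`-invariant metrics on `Sp(2k+l)`:
`h(1) = (2k+1)(4k+2l+1)(k-l)(2k+l)²` for all real `k, l`; consequently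
`h(1) < 0` when `k` and `l` are positive integers with `k < l`. -/
theorem groebner_h_at_one (k l : ℝ) (h : ℝ → ℝ)
    (hh : ∀ y : ℝ, h y =
      2*l^2*(l+k)*(4*k^2+4*k*l+2*l^2+l) * y^8
      - 4*l^2*(2*k+l+1)*(8*k^2+8*k*l+2*l^2+l) * y^7
      + l*(64*k^4+304*k^3*l+284*k^2*l^2+88*k*l^3+4*l^4+40*k^3+238*k^2*l
          +162*k*l^2+32*l^3+8*k^2+51*k*l+19*l^2+2*l) * y^6
      - 8*l*(2*k+l+1)*(28*k^3+40*k^2*l+10*k*l^2+14*k^2+21*k*l+4*l^2+2*k+2*l) * y^5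
      + (128*k^5+1376*k^4*l+1472*k^3*l^2+468*k^2*l^3+24*k*l^4+160*k^4+1684*k^3*l
          +1372*k^2*l^2+336*k*l^3+8*l^4+82*k^3+713*k^2*l+406*k*l^2+60*l^3
          +20*k^2+118*k*l+38*l^2+2*k+5*l) * y^4
      - 4*(2*k+l+1)*(96*k^4+248*k^3*l+62*k^2*l^2+92*k^3+215*k^2*l+46*k*l^2
          +32*k^2+55*k*l+8*l^2+4*k+4*l) * y^3
      + (1792*k^5+2432*k^4*l+848*k^3*l^2+36*k^2*l^3+2848*k^4+3100*k^3*l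
          +896*k^2*l^2+24*k*l^3+1714*k^3+1427*k^2*l+304*k*l^2+4*l^3+478*k^2
          +278*k*l+32*l^2+58*k+19*l+2) * y^2
      - 4*(5*k+1)*(2*k+1)*(3*k+1)*(2*k+l+1)*(8*k+2*l+1) * y
      + 2*(2*k+1)^2*(5*k+1)^2*(4*k+2*l+1)) :
    h 1 = (2*k+1)*(4*k+2*l+1)*(k-l)*(2*k+l)^2 ∧
    ((∃ m : ℕ, 0 < m ∧ k = m) → (∃ n : ℕ, 0 < n ∧ l = n) → k < l → h 1 < 0) := by
  have h1 : h 1 = (2*k+1)*(4*k+2*l+1)*(k-l)*(2*k+l)^2 := by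
    rw [hh 1]; ring
  refine ⟨h1, fun ⟨m, hm, hk⟩ ⟨n, hn, hl⟩ hkl => ?_⟩
  have hk0 : (0:ℝ) < k := hk ▸ Nat.cast_pos.mpr hm
  have hl0 : (0:ℝ) < l := hl ▸ Nat.cast_pos.mpr hn
  rw [h1]
  have hneg : k - l < 0 := by linarith
  exact mul_neg_of_neg_of_pos
    (mul_neg_of_pos_of_neg (by positivity) hneg) (by positivity)
end

section
/- Let k and l be positive integers with k < l and let h : ℝ → ℝ be the degree-8 polynomial function defined in the context. Then h has at least two real roots: there exist real numbers t₁ and t₂ with 0 < t₁ < 1 < t₂ such that h(t₁) = 0 and h(t₂) = 0. -/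
set_option maxHeartbeats 2000000

open Polynomial Filter

/-- For positive integers `k < l`, the degree-8 Gröbner-basis polynomial `h`
arising from the Einstein equations for `Ad(Sp(k)×Sp(k)×Sp(l))`-invariant
metrics on `Sp(2k+l)` has at least two real roots, one in `(0,1)` and one in
`(1,∞)`.  Each such root yields a non-naturally reductive left-invariant
Einstein metric on `Sp(2k+l)`. -/
theorem groebner_h_two_roots (k l : ℕ) (hk : 0 < k) (hkl : k < l) (h : ℝ → ℝ)
    (hh : ∀ y : ℝ, h y =
      2*l^2*(l+k)*(4*k^2+4*k*l+2*l^2+l) * y^8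
      - 4*l^2*(2*k+l+1)*(8*k^2+8*k*l+2*l^2+l) * y^7
      + l*(64*k^4+304*k^3*l+284*k^2*l^2+88*k*l^3+4*l^4+40*k^3+238*k^2*l
          +162*k*l^2+32*l^3+8*k^2+51*k*l+19*l^2+2*l) * y^6
      - 8*l*(2*k+l+1)*(28*k^3+40*k^2*l+10*k*l^2+14*k^2+21*k*l+4*l^2+2*k+2*l) * y^5
      + (128*k^5+1376*k^4*l+1472*k^3*l^2+468*k^2*l^3+24*k*l^4+160*k^4+1684*k^3*l
          +1372*k^2*l^2+336*k*l^3+8*l^4+82*k^3+713*k^2*l+406*k*l^2+60*l^3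
          +20*k^2+118*k*l+38*l^2+2*k+5*l) * y^4
      - 4*(2*k+l+1)*(96*k^4+248*k^3*l+62*k^2*l^2+92*k^3+215*k^2*l+46*k*l^2
          +32*k^2+55*k*l+8*l^2+4*k+4*l) * y^3
      + (1792*k^5+2432*k^4*l+848*k^3*l^2+36*k^2*l^3+2848*k^4+3100*k^3*l
          +896*k^2*l^2+24*k*l^3+1714*k^3+1427*k^2*l+304*k*l^2+4*l^3+478*k^2
          +278*k*l+32*l^2+58*k+19*l+2) * y^2
      - 4*(5*k+1)*(2*k+1)*(3*k+1)*(2*k+l+1)*(8*k+2*l+1) * y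
      + 2*(2*k+1)^2*(5*k+1)^2*(4*k+2*l+1)) :
    ∃ t₁ t₂ : ℝ, 0 < t₁ ∧ t₁ < 1 ∧ 1 < t₂ ∧ h t₁ = 0 ∧ h t₂ = 0 := by
  have hK : (1:ℝ) ≤ (k:ℝ) := by exact_mod_cast hk
  have hL : (k:ℝ) + 1 ≤ (l:ℝ) := by exact_mod_cast hkl
  set K : ℝ := (k:ℝ) with hKdef
  set L : ℝ := (l:ℝ) with hLdef
  -- the polynomial
  set p : ℝ[X] :=
      C (2*L^2*(L+K)*(4*K^2+4*K*L+2*L^2+L)) * X^8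
      - C (4*L^2*(2*K+L+1)*(8*K^2+8*K*L+2*L^2+L)) * X^7
      + C (L*(64*K^4+304*K^3*L+284*K^2*L^2+88*K*L^3+4*L^4+40*K^3+238*K^2*L
          +162*K*L^2+32*L^3+8*K^2+51*K*L+19*L^2+2*L)) * X^6
      - C (8*L*(2*K+L+1)*(28*K^3+40*K^2*L+10*K*L^2+14*K^2+21*K*L+4*L^2+2*K+2*L)) * X^5
      + C (128*K^5+1376*K^4*L+1472*K^3*L^2+468*K^2*L^3+24*K*L^4+160*K^4+1684*K^3*L
          +1372*K^2*L^2+336*K*L^3+8*L^4+82*K^3+713*K^2*L+406*K*L^2+60*L^3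
          +20*K^2+118*K*L+38*L^2+2*K+5*L) * X^4
      - C (4*(2*K+L+1)*(96*K^4+248*K^3*L+62*K^2*L^2+92*K^3+215*K^2*L+46*K*L^2
          +32*K^2+55*K*L+8*L^2+4*K+4*L)) * X^3
      + C (1792*K^5+2432*K^4*L+848*K^3*L^2+36*K^2*L^3+2848*K^4+3100*K^3*L
          +896*K^2*L^2+24*K*L^3+1714*K^3+1427*K^2*L+304*K*L^2+4*L^3+478*K^2
          +278*K*L+32*L^2+58*K+19*L+2) * X^2
      - C (4*(5*K+1)*(2*K+1)*(3*K+1)*(2*K+L+1)*(8*K+2*L+1)) * X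
      + C (2*(2*K+1)^2*(5*K+1)^2*(4*K+2*L+1)) with hpdef
  have hp : ∀ y : ℝ, p.eval y = h y := by
    intro y
    rw [hh y, hpdef]
    simp only [eval_add, eval_sub, eval_mul, eval_pow, eval_C, eval_X]
  have hcont : Continuous h := by
    have : h = fun y => p.eval y := funext fun y => (hp y).symm
    rw [this]
    exact p.continuous
  have hKpos : (0:ℝ) < K := lt_of_lt_of_le one_pos hK
  have hLpos : (0:ℝ) < L := by linarith
  -- h 0 > 0
  have h0 : 0 < h 0 := by
    rw [hh 0]
    norm_num
    positivity
  -- h 1 < 0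
  have h1 : h 1 < 0 := by
    rw [hh 1]
    have hn : (0:ℝ) ≤ K - 1 := by linarith
    have hm : (0:ℝ) ≤ L - K - 1 := by linarith
    nlinarith [mul_nonneg hn hm, mul_nonneg (pow_nonneg hn 2) hm,
      mul_nonneg (pow_nonneg hn 3) hm, mul_nonneg (pow_nonneg hn 4) hm,
      mul_nonneg hn (pow_nonneg hm 2), mul_nonneg hn (pow_nonneg hm 3),
      mul_nonneg hn (pow_nonneg hm 4),
      mul_nonneg (pow_nonneg hn 2) (pow_nonneg hm 2),
      mul_nonneg (pow_nonneg hn 2) (pow_nonneg hm 3),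
      mul_nonneg (pow_nonneg hn 3) (pow_nonneg hm 2),
      pow_nonneg hn 2, pow_nonneg hn 3, pow_nonneg hn 4,
      pow_nonneg hm 2, pow_nonneg hm 3, pow_nonneg hm 4, hn, hm]
  -- leading coefficient
  have ha8 : (0:ℝ) < 2*L^2*(L+K)*(4*K^2+4*K*L+2*L^2+L) := by positivity
  have hdeg : p.natDegree = 8 := by
    rw [hpdef]
    compute_degree!
    refine ⟨⟨?_, ?_⟩, ?_⟩ <;> positivity
  have hdeg' : 0 < p.degree := by
    rw [Polynomial.degree_eq_natDegree (by intro hz; simp [hz] at hdeg), hdeg]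
    norm_num
  have hlc : 0 ≤ p.leadingCoeff := by
    rw [Polynomial.leadingCoeff, hdeg, hpdef]
    simp only [coeff_add, coeff_sub, coeff_C_mul, coeff_X_pow, coeff_X, coeff_C]
    norm_num
    positivity
  have htend : Tendsto (fun y => p.eval y) atTop atTop :=
    p.tendsto_atTop_of_leadingCoeff_nonneg hdeg' hlc
  obtain ⟨M, hM⟩ := ((htend.eventually_gt_atTop 0).and (eventually_gt_atTop 1)).exists
  have hM0 : 0 < h M := by rw [← hp M]; exact hM.1
  have hM1 : (1:ℝ) < M := hM.2
  -- first root
  obtain ⟨t₁, ht₁mem, ht₁⟩ := intermediate_value_Icc' (by norm_num : (0:ℝ) ≤ 1)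
    hcont.continuousOn ⟨le_of_lt h1, le_of_lt h0⟩
  -- second root
  obtain ⟨t₂, ht₂mem, ht₂⟩ := intermediate_value_Icc (le_of_lt hM1)
    hcont.continuousOn ⟨le_of_lt h1, le_of_lt hM0⟩
  refine ⟨t₁, t₂, ?_, ?_, ?_, ht₁, ht₂⟩
  · rcases lt_or_eq_of_le ht₁mem.1 with h' | h'
    · exact h'
    · exfalso; rw [← h'] at ht₁; linarith
  · rcases lt_or_eq_of_le ht₁mem.2 with h' | h'
    · exact h'
    · exfalso; rw [h'] at ht₁; linarith
  · rcases lt_or_eq_of_le ht₂mem.1 with h' | h'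
    · exact h'
    · exfalso; rw [← h'] at ht₂; linarith
end
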